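/- Let X be a real random variable with characteristic function Φ_X(ξ) = E[e^{iξX}], and let 0 < p < 2. Then E[|X|^p] = c_p · ∫_ℝ (1 - Re Φ_X(ξ)) / |ξ|^{p+1} dξ, where c_p = (∫_ℝ (1 - cos u)/|u|^{p+1} du)^{-1}, with both sides possibly equal to +∞. -/

import Mathlib

open MeasureTheory Real Set
open scoped ENNReal

namespace Stmt4Aux

/-- The kernel function. -/
noncomputable def g (p : ℝ) (u : ℝ) : ℝ := (1 - Real.cos u) / |u| ^ (p + 1)

lemma g_nonneg (p u : ℝ) : 0 ≤ g p u :=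
  div_nonneg (by linarith [Real.cos_le_one u]) (Real.rpow_nonneg (abs_nonneg u) _)

lemma measurable_g {p : ℝ} (hp0 : 0 < p) : Measurable (g p) :=
  (measurable_const.sub Real.measurable_cos).div
    ((continuous_abs.rpow_const (fun x => Or.inr (by linarith))).measurable)

lemma g_neg (p u : ℝ) : g p (-u) = g p u := by simp [g]

lemma integrableOn_g_Ioc {p : ℝ} (hp0 : 0 < p) (hp2 : p < 2) :
    IntegrableOn (g p) (Ioc 0 1) := by
  have h1 : IntegrableOn (fun u : ℝ => u ^ (1 - p)) (Ioc (0:ℝ) 1) :=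
    (intervalIntegral.intervalIntegrable_rpow' (by linarith)).1
  refine Integrable.mono' h1 (measurable_g hp0).aestronglyMeasurable ?_
  filter_upwards [ae_restrict_mem measurableSet_Ioc] with u hu
  obtain ⟨hu0, hu1⟩ := hu
  rw [Real.norm_eq_abs, abs_of_nonneg (g_nonneg p u), g, abs_of_pos hu0]
  have hcos : 1 - Real.cos u ≤ u ^ ((2:ℕ) : ℝ) := by
    rw [Real.rpow_natCast]
    nlinarith [Real.one_sub_sq_div_two_le_cos (x := u), sq_nonneg u]
  calc (1 - Real.cos u) / u ^ (p + 1) ≤ u ^ ((2:ℕ):ℝ) / u ^ (p + 1) := by gcongr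
    _ = u ^ (1 - p) := by
        rw [← Real.rpow_sub hu0]
        congr 1
        push_cast
        ring

lemma integrableOn_g_Ioi {p : ℝ} (hp0 : 0 < p) : IntegrableOn (g p) (Ioi 1) := by
  have h1 : IntegrableOn (fun u : ℝ => 2 * u ^ (-(p + 1))) (Ioi (1:ℝ)) :=
    (integrableOn_Ioi_rpow_of_lt (by linarith) one_pos).const_mul 2
  refine Integrable.mono' h1 (measurable_g hp0).aestronglyMeasurable ?_
  filter_upwards [ae_restrict_mem measurableSet_Ioi] with u hu
  have hu0 : (0:ℝ) < u := lt_trans one_pos hu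
  rw [Real.norm_eq_abs, abs_of_nonneg (g_nonneg p u)]
  simp only [g, abs_of_pos hu0]
  rw [Real.rpow_neg hu0.le, ← div_eq_mul_inv]
  gcongr
  linarith [Real.neg_one_le_cos u]

lemma integrableOn_g_Ioi0 {p : ℝ} (hp0 : 0 < p) (hp2 : p < 2) :
    IntegrableOn (g p) (Ioi 0) := by
  rw [← Set.Ioc_union_Ioi_eq_Ioi (zero_le_one (α := ℝ))]
  exact (integrableOn_g_Ioc hp0 hp2).union (integrableOn_g_Ioi hp0)

lemma integrable_g {p : ℝ} (hp0 : 0 < p) (hp2 : p < 2) : Integrable (g p) := by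
  have hpos := integrableOn_g_Ioi0 hp0 hp2
  have hneg : IntegrableOn (g p) (Iio 0) := by
    have := (MeasurePreserving.integrableOn_comp_preimage
      (Measure.measurePreserving_neg (volume : Measure ℝ))
      (Homeomorph.neg ℝ).measurableEmbedding).2 hpos
    have heq : (Neg.neg ⁻¹' (Ioi (0:ℝ))) = Iio 0 := by
      ext x; simp
    rw [heq] at this
    refine this.congr_fun (fun x _ => ?_) measurableSet_Iio
    exact (g_neg p x)
  have hIic : IntegrableOn (g p) (Iic 0) := by
    refine hneg.congr_set_ae ?_
    exact (Iio_ae_eq_Iic (a := (0:ℝ)) (μ := volume)).symm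
  have : IntegrableOn (g p) (Iic 0 ∪ Ioi 0) := hIic.union hpos
  rwa [Set.Iic_union_Ioi, integrableOn_univ] at this

lemma integral_g_pos {p : ℝ} (hp0 : 0 < p) (hp2 : p < 2) : 0 < ∫ u, g p u := by
  rw [integral_pos_iff_support_of_nonneg (fun u => g_nonneg p u) (integrable_g hp0 hp2)]
  have hsub : Ioo (0:ℝ) 1 ⊆ Function.support (g p) := by
    intro u hu
    obtain ⟨hu0, hu1⟩ := hu
    have hπ : |u| ≤ π := by
      rw [abs_of_pos hu0]
      linarith [Real.pi_gt_three]
    have hcos : Real.cos u < 1 := by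
      have := Real.cos_le_one_sub_mul_cos_sq hπ
      have hπ2 : (0:ℝ) < π ^ 2 := by positivity
      have hq : 0 < 2 / π ^ 2 * u ^ 2 := by positivity
      linarith
    have : 0 < g p u := by
      apply div_pos (by linarith)
      exact Real.rpow_pos_of_pos (abs_pos.mpr hu0.ne') _
    exact this.ne'
  calc (0:ℝ≥0∞) < volume (Ioo (0:ℝ) 1) := by simp
    _ ≤ volume (Function.support (g p)) := measure_mono hsub

/-- Scaling identity (Bochner integral form), `x ≠ 0`. -/
lemma integral_scaled {p : ℝ} (hp0 : 0 < p) (hp2 : p < 2) {x : ℝ} (hx : x ≠ 0) :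
    ∫ ξ : ℝ, (1 - Real.cos (x * ξ)) / |ξ| ^ (p + 1)
      = |x| ^ p * ∫ u, g p u := by
  have hax : (0:ℝ) < |x| := abs_pos.mpr hx
  have key : ∀ ξ : ℝ, (1 - Real.cos (x * ξ)) / |ξ| ^ (p + 1)
      = |x| ^ (p + 1) * g p (x * ξ) := by
    intro ξ
    rcases eq_or_ne ξ 0 with rfl | hξ
    · simp [g, Real.zero_rpow (by positivity : p + 1 ≠ 0)]
    · have haξ : (0:ℝ) < |ξ| := abs_pos.mpr hξ
      simp only [g, abs_mul, Real.mul_rpow hax.le haξ.le]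
      field_simp
  simp_rw [key]
  rw [integral_const_mul, MeasureTheory.Measure.integral_comp_mul_left (g p) x,
    smul_eq_mul, ← mul_assoc]
  congr 1
  rw [abs_inv, ← Real.rpow_neg_one |x|, ← Real.rpow_add hax]
  congr 1
  ring

lemma integrable_scaled {p : ℝ} (hp0 : 0 < p) (hp2 : p < 2) {x : ℝ} (hx : x ≠ 0) :
    Integrable (fun ξ : ℝ => (1 - Real.cos (x * ξ)) / |ξ| ^ (p + 1)) := by
  have hax : (0:ℝ) < |x| := abs_pos.mpr hx
  have : Integrable (fun ξ : ℝ => |x| ^ (p + 1) * g p (x * ξ)) :=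
    (((integrable_g hp0 hp2).comp_mul_left' hx)).const_mul _
  refine this.congr (Filter.Eventually.of_forall fun ξ => ?_)
  rcases eq_or_ne ξ 0 with rfl | hξ
  · simp [g, Real.zero_rpow (by positivity : p + 1 ≠ 0)]
  · have haξ : (0:ℝ) < |ξ| := abs_pos.mpr hξ
    simp only [g, abs_mul, Real.mul_rpow hax.le haξ.le]
    field_simp

/-- Lintegral version of the scaling identity, valid for all `x`. -/
lemma lintegral_scaled {p : ℝ} (hp0 : 0 < p) (hp2 : p < 2) (x : ℝ) :
    ∫⁻ ξ : ℝ, ENNReal.ofReal ((1 - Real.cos (x * ξ)) / |ξ| ^ (p + 1))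
      = ENNReal.ofReal (∫ u, g p u) * ENNReal.ofReal (|x| ^ p) := by
  rcases eq_or_ne x 0 with rfl | hx
  · simp [Real.zero_rpow hp0.ne']
  · rw [← ofReal_integral_eq_lintegral_ofReal (integrable_scaled hp0 hp2 hx)
      (Filter.Eventually.of_forall fun ξ => div_nonneg
        (by linarith [Real.cos_le_one (x * ξ)]) (Real.rpow_nonneg (abs_nonneg ξ) _)),
      integral_scaled hp0 hp2 hx,
      ENNReal.ofReal_mul (Real.rpow_nonneg (abs_nonneg x) _), mul_comm]

end Stmt4Aux

open Stmt4Aux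

/-- Moment formula: for `0 < p < 2`,
`E[|X|^p] = c_p ∫ (1 - Re Φ_X(ξ)) / |ξ|^{p+1} dξ` with
`c_p = (∫ (1 - cos u)/|u|^{p+1} du)⁻¹`, as an equality in `[0,∞]`. -/
theorem stmt_4 {Ω : Type*} [MeasurableSpace Ω] (P : Measure Ω) [IsProbabilityMeasure P]
    (X : Ω → ℝ) (hX : AEMeasurable X P) (p : ℝ) (hp0 : 0 < p) (hp2 : p < 2) :
    ∫⁻ ω, ENNReal.ofReal (|X ω| ^ p) ∂P
      = ENNReal.ofReal ((∫ u : ℝ, (1 - Real.cos u) / |u| ^ (p + 1))⁻¹)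
        * ∫⁻ ξ : ℝ, ENNReal.ofReal
            ((1 - (∫ ω, Complex.exp (Complex.I * ξ * (X ω)) ∂P).re) / |ξ| ^ (p + 1)) := by
  set C : ℝ := ∫ u, g p u with hC
  have hCpos : 0 < C := integral_g_pos hp0 hp2
  have hCeq : (∫ u : ℝ, (1 - Real.cos u) / |u| ^ (p + 1)) = C := rfl
  -- Step 1: the real part of the characteristic function
  have hre : ∀ ξ : ℝ, 1 - (∫ ω, Complex.exp (Complex.I * ξ * (X ω)) ∂P).re
      = ∫ ω, (1 - Real.cos (ξ * X ω)) ∂P := by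
    intro ξ
    have hmeas : AEStronglyMeasurable (fun ω => Complex.exp (Complex.I * ξ * (X ω))) P := by
      apply (Complex.measurable_exp.comp_aemeasurable ?_).aestronglyMeasurable
      exact (Complex.measurable_ofReal.comp_aemeasurable hX).const_mul (Complex.I * ξ)
    have hint : Integrable (fun ω => Complex.exp (Complex.I * ξ * (X ω))) P := by
      refine (integrable_const (1:ℝ)).mono' hmeas ?_
      refine Filter.Eventually.of_forall fun ω => ?_
      rw [Complex.norm_exp]
      have : (Complex.I * ξ * (X ω : ℂ)).re = 0 := by simp
      rw [this, Real.exp_zero]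
    have hint_cos : Integrable (fun ω => Real.cos (ξ * X ω)) P := by
      refine (integrable_const (1:ℝ)).mono'
        ((Real.measurable_cos.comp_aemeasurable (hX.const_mul ξ)).aestronglyMeasurable) ?_
      exact Filter.Eventually.of_forall fun ω => by
        simpa using Real.abs_cos_le_one (ξ * X ω)
    have h1 : (∫ ω, Complex.exp (Complex.I * ξ * (X ω)) ∂P).re
        = ∫ ω, Real.cos (ξ * X ω) ∂P := by
      rw [← RCLike.re_to_complex, ← integral_re hint]
      congr 1
      ext ω
      rw [RCLike.re_to_complex]
      have : Complex.I * ξ * (X ω : ℂ) = ((ξ * X ω : ℝ) : ℂ) * Complex.I := by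
        push_cast; ring
      rw [this, Complex.exp_ofReal_mul_I_re]
    rw [h1, integral_sub (integrable_const 1) hint_cos, integral_const]
    simp
  -- Step 2: pointwise identity for the outer integrand
  have hpt : ∀ ξ : ℝ,
      ENNReal.ofReal ((1 - (∫ ω, Complex.exp (Complex.I * ξ * (X ω)) ∂P).re) / |ξ| ^ (p + 1))
        = ∫⁻ ω, ENNReal.ofReal ((1 - Real.cos (ξ * X ω)) / |ξ| ^ (p + 1)) ∂P := by
    intro ξ
    rcases eq_or_ne ξ 0 with rfl | hξ
    · simp [Real.zero_rpow (by positivity : p + 1 ≠ 0)]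
    · have haξ : (0:ℝ) < |ξ| := abs_pos.mpr hξ
      have hint : Integrable (fun ω => (1 - Real.cos (ξ * X ω)) / |ξ| ^ (p + 1)) P := by
        have hint_cos : Integrable (fun ω => 1 - Real.cos (ξ * X ω)) P := by
          refine (integrable_const 1).sub ?_
          refine (integrable_const (1:ℝ)).mono'
            ((Real.measurable_cos.comp_aemeasurable (hX.const_mul ξ)).aestronglyMeasurable) ?_
          exact Filter.Eventually.of_forall fun ω => by
            simpa using Real.abs_cos_le_one (ξ * X ω)
        exact hint_cos.div_const _
      rw [hre, ← integral_div,
        ← ofReal_integral_eq_lintegral_ofReal hint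
          (Filter.Eventually.of_forall fun ω => div_nonneg
            (by linarith [Real.cos_le_one (ξ * X ω)]) (Real.rpow_nonneg (abs_nonneg ξ) _))]
  simp_rw [hpt]
  -- Step 3: swap the integrals (Tonelli)
  have hswap : ∫⁻ ξ : ℝ, ∫⁻ ω, ENNReal.ofReal ((1 - Real.cos (ξ * X ω)) / |ξ| ^ (p + 1)) ∂P
      = ∫⁻ ω, (∫⁻ ξ : ℝ, ENNReal.ofReal ((1 - Real.cos (ξ * X ω)) / |ξ| ^ (p + 1))) ∂P := by
    apply lintegral_lintegral_swap
    apply ENNReal.measurable_ofReal.comp_aemeasurable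
    have hXp : AEMeasurable (fun z : ℝ × Ω => X z.2) ((volume : Measure ℝ).prod P) :=
      hX.comp_quasiMeasurePreserving Measure.quasiMeasurePreserving_snd
    have h1 : AEMeasurable (fun z : ℝ × Ω => 1 - Real.cos (z.1 * X z.2))
        ((volume : Measure ℝ).prod P) :=
      aemeasurable_const.sub
        (Real.measurable_cos.comp_aemeasurable (measurable_fst.aemeasurable.mul hXp))
    exact h1.div (((continuous_abs.rpow_const (fun x => Or.inr (by linarith))).measurable.comp
      measurable_fst).aemeasurable)
  rw [hswap]
  -- Step 4: evaluate the inner integral using the scaling identity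
  have hinner : ∀ ω, ∫⁻ ξ : ℝ, ENNReal.ofReal ((1 - Real.cos (ξ * X ω)) / |ξ| ^ (p + 1))
      = ENNReal.ofReal C * ENNReal.ofReal (|X ω| ^ p) := by
    intro ω
    have := lintegral_scaled hp0 hp2 (X ω)
    simp_rw [mul_comm (X ω)] at this
    exact this
  simp_rw [hinner]
  rw [lintegral_const_mul' _ _ ENNReal.ofReal_ne_top, ← mul_assoc,
    ← ENNReal.ofReal_mul (by positivity), hCeq, inv_mul_cancel₀ hCpos.ne',
    ENNReal.ofReal_one, one_mul]
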